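/- With $Z(p) = \frac{(2p-4)!}{(p-2)!\,p!}(9/4)^{p-1}$ for $p \ge 2$ and $q_k = Z(k+1)\cdot 9^{-k}$ for $k \ge 1$, we have $2\sum_{k\ge 1} k\, q_k = 2/3$. -/

import Mathlib

open scoped Nat

open Filter Finset

private noncomputable def uiptA (n : ℕ) : ℝ := ((2 * n)! : ℝ) / ((n ! : ℝ) * (n ! : ℝ) * 4 ^ n)

private noncomputable def uiptB (n : ℕ) : ℝ := uiptA n * (3 * n + 2) / (6 * (n + 1))

private lemma factorial_pos_real (n : ℕ) : (0 : ℝ) < (n ! : ℝ) := by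
  exact_mod_cast n.factorial_pos

private lemma uiptA_pos (n : ℕ) : 0 < uiptA n := by
  unfold uiptA
  positivity

private lemma uiptA_succ (n : ℕ) :
    uiptA (n + 1) = uiptA n * (2 * n + 1) / (2 * (n + 1)) := by
  unfold uiptA
  have h1 : (2 * (n + 1)) = (2 * n + 1) + 1 := by ring
  rw [h1, Nat.factorial_succ, Nat.factorial_succ, Nat.factorial_succ]
  have h2 := factorial_pos_real n
  have h3 := factorial_pos_real (2 * n)
  push_cast
  field_simp
  ring

private lemma uiptA_sq_le (n : ℕ) : (uiptA n) ^ 2 ≤ 1 / (2 * n + 1) := by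
  induction n with
  | zero => simp [uiptA]
  | succ n ih =>
      have hA := uiptA_pos n
      have ih' : uiptA n ^ 2 * (2 * (n:ℝ) + 1) ≤ 1 :=
        (le_div_iff₀ (by positivity)).mp ih
      rw [uiptA_succ]
      push_cast
      rw [div_pow, div_le_div_iff₀ (by positivity) (by positivity)]
      nlinarith [mul_le_mul_of_nonneg_right ih'
        (show (0:ℝ) ≤ (2 * n + 1) * (2 * n + 3) by positivity), sq_nonneg (uiptA n)]

private lemma uiptA_tendsto : Tendsto uiptA atTop (nhds 0) := by
  have h0 : Tendsto (fun n : ℕ => 2 * (n:ℝ) + 1) atTop atTop := by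
    apply Filter.tendsto_atTop_add_const_right
    exact (tendsto_natCast_atTop_atTop (R := ℝ)).const_mul_atTop (by norm_num)
  have hs : Tendsto (fun n : ℕ => Real.sqrt ((2 * (n:ℝ) + 1)⁻¹)) atTop (nhds 0) := by
    simpa using h0.inv_tendsto_atTop.sqrt
  refine squeeze_zero (fun n => (uiptA_pos n).le) (fun n => ?_) hs
  have h1 := Real.sqrt_le_sqrt (uiptA_sq_le n)
  rwa [Real.sqrt_sq (uiptA_pos n).le, one_div] at h1

private lemma uiptB_tendsto : Tendsto uiptB atTop (nhds 0) := by
  refine squeeze_zero (fun n => ?_) (fun n => ?_) uiptA_tendsto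
  · unfold uiptB; have := (uiptA_pos n).le; positivity
  · unfold uiptB
    rw [div_le_iff₀ (by positivity)]
    have h := (uiptA_pos n).le
    nlinarith [(uiptA_pos n).le, Nat.cast_nonneg (α := ℝ) n]

/-- The expected number of swallowed edges for the type-2 half-plane UIPT:
`2 ∑_{k≥1} k q_k = 2/3` where `q_k = Z(k+1)·9^{-k}` and
`Z(p) = (2p-4)!/((p-2)!·p!)·(9/4)^{p-1}` for `p ≥ 2`. -/
theorem expected_swallowed_edges_type2 :
    2 * ∑' k : ℕ,
        ((k + 1 : ℝ)) *
          (((((2 * (k + 2) - 4)! : ℝ) / (((k + 2 - 2)! : ℝ) * ((k + 2)! : ℝ)))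
              * (9 / 4) ^ (k + 2 - 1)) / 9 ^ (k + 1)) = 2 / 3 := by
  set f : ℕ → ℝ := fun k =>
    ((k + 1 : ℝ)) *
      (((((2 * (k + 2) - 4)! : ℝ) / (((k + 2 - 2)! : ℝ) * ((k + 2)! : ℝ)))
          * (9 / 4) ^ (k + 2 - 1)) / 9 ^ (k + 1)) with hf
  have hsimp : ∀ k : ℕ, f k =
      ((k + 1 : ℝ)) * ((((2 * k)! : ℝ) / ((k ! : ℝ) * ((k + 2)! : ℝ))) * (9 / 4) ^ (k + 1))
        / 9 ^ (k + 1) := by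
    intro k
    have e1 : 2 * (k + 2) - 4 = 2 * k := by omega
    have e2 : k + 2 - 2 = k := by omega
    have e3 : k + 2 - 1 = k + 1 := by omega
    simp only [hf, e1, e2, e3]
    ring
  have htel : ∀ k : ℕ, f k = uiptB k - uiptB (k + 1) := by
    intro k
    rw [hsimp k]
    unfold uiptB uiptA
    have hk2 : ((k + 2)! : ℝ) = (k + 2) * ((k + 1) * (k !)) := by
      rw [Nat.factorial_succ, Nat.factorial_succ]; push_cast; ring
    have hk1 : ((k + 1)! : ℝ) = (k + 1) * (k !) := by
      rw [Nat.factorial_succ]; push_cast; ring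
    have h2k2 : ((2 * (k + 1))! : ℝ) = (2 * k + 2) * ((2 * k + 1) * ((2 * k)!)) := by
      have : 2 * (k + 1) = (2 * k + 1) + 1 := by ring
      rw [this, Nat.factorial_succ, Nat.factorial_succ]; push_cast; ring
    rw [hk2, hk1, h2k2]
    have hfk := factorial_pos_real k
    have hf2k := factorial_pos_real (2 * k)
    have h9 : ((9:ℝ)/4) ^ (k+1) / 9 ^ (k+1) = 1 / 4 ^ (k+1) := by
      rw [div_pow]
      field_simp
    have hk0 : (0:ℝ) < (k:ℝ) + 1 := by positivity
    rw [div_pow]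
    field_simp
    all_goals push_cast
    all_goals ring
  have hb0 : uiptB 0 = 1 / 3 := by
    unfold uiptB uiptA
    norm_num
  have hnonneg : ∀ k, 0 ≤ f k := by
    intro k
    rw [hsimp k]
    have := factorial_pos_real k
    have := factorial_pos_real (2 * k)
    have := factorial_pos_real (k + 2)
    positivity
  have hsum : HasSum f (1 / 3) := by
    rw [hasSum_iff_tendsto_nat_of_nonneg hnonneg]
    have hps : ∀ n : ℕ, ∑ i ∈ range n, f i = uiptB 0 - uiptB n := by
      intro n
      calc ∑ i ∈ range n, f i = ∑ i ∈ range n, (uiptB i - uiptB (i + 1)) := by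
            exact Finset.sum_congr rfl fun i _ => htel i
        _ = uiptB 0 - uiptB n := Finset.sum_range_sub' uiptB n
    simp only [hps, hb0]
    have := uiptB_tendsto.const_sub (1/3 : ℝ)
    simpa using this
  rw [hsum.tsum_eq]
  norm_num
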